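/- Let d ≥ 4 and m ≥ 2 be natural numbers, let R be a linear subspace of ℝ^d with 1 ≤ dim R ≤ d-1, and let Z ⊆ ℝ^d be a finite nonempty set contained in m distinct cosets of R. Let ψ : ℝ^d → ℝ^d/R be the quotient map, let U = ψ(Z), and suppose the affine dimension u of U satisfies u+1 ≤ m ≤ 2u. Then |(Z-Z) \ R| ≥ 2(2u+1-m)|Z| - 16(u² + m²). -/

import Mathlib

open Finset Pointwise
set_option linter.unusedSectionVars false

section Claim1

variable {V : Type*} [AddCommGroup V] [Module ℝ V]

/-- `c - d` is an alternative representation of the difference `t - x`. -/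
def AltRep (U : Finset V) (t x c d : V) : Prop :=
  c ∈ U ∧ d ∈ U ∧ c - d = t - x ∧ ¬(c = t ∧ d = x)

open Classical in
/-- The set of `x ∈ U \ {t}` such that `t - x` has a second representation. -/
noncomputable def badF (U : Finset V) (t : V) : Finset V :=
  (U.erase t).filter (fun x => ∃ c d, AltRep U t x c d)

open Classical in
noncomputable def cset (U : Finset V) (t p : V) : Finset V :=
  (badF U t).filter (fun x => p ≠ x ∧ ∀ c d, AltRep U t x c d → (p = c ∨ p = d))

lemma mem_badF {U : Finset V} {t x : V} :
    x ∈ badF U t ↔ x ∈ U ∧ x ≠ t ∧ ∃ c d, AltRep U t x c d := by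
  classical
  simp only [badF, Finset.mem_filter, Finset.mem_erase]
  tauto

lemma altRep_d_ne {U : Finset V} {t x c d : V} (h : AltRep U t x c d) : d ≠ x := by
  rintro rfl
  obtain ⟨-, -, heq, hnt⟩ := h
  exact hnt ⟨sub_left_inj.1 heq, rfl⟩

lemma altRep_c_ne_t {U : Finset V} {t x c d : V} (h : AltRep U t x c d) : c ≠ t := by
  rintro rfl
  obtain ⟨-, -, heq, hnt⟩ := h
  exact hnt ⟨rfl, (sub_right_inj.1 heq)⟩

lemma altRep_symm {U : Finset V} {t x c d : V} (h : AltRep U t x c d)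
    (hxU : x ∈ U) (hxt : x ≠ t) : AltRep U t c x d := by
  obtain ⟨hc, hd, heq, -⟩ := h
  refine ⟨hxU, hd, ?_, fun h' => hxt h'.1⟩
  rw [sub_eq_sub_iff_add_eq_add] at heq ⊢
  rw [add_comm x c]; exact heq

lemma badF_of_altRep {U : Finset V} {t x c d : V} (hx : x ∈ badF U t)
    (h : AltRep U t x c d) : c ∈ badF U t := by
  obtain ⟨hxU, hxt, -⟩ := mem_badF.1 hx
  exact mem_badF.2 ⟨h.1, altRep_c_ne_t h, x, d, altRep_symm h hxU hxt⟩


open Classical in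
lemma exists_cset_small {U : Finset V} {t : V} (ht : t ∈ U) (hB : (badF U t).Nonempty) :
    ∃ p ∈ badF U t, (cset U t p).card ≤ 1 := by
  classical
  by_contra hno
  push_neg at hno
  set B := badF U t with hBdef
  have hno' : ∀ p ∈ B, 2 ≤ (cset U t p).card := fun p hp => hno p hp
  -- the "e" sets
  set e : V → Finset V := fun x =>
    B.filter (fun p => p ≠ x ∧ ∀ c d, AltRep U t x c d → (p = c ∨ p = d)) with hedef
  -- double counting
  have hswap : ∑ p ∈ B, (cset U t p).card = ∑ x ∈ B, (e x).card := by
    have h1 : ∀ p, (cset U t p).card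
        = ∑ x ∈ B, (if p ≠ x ∧ (∀ c d, AltRep U t x c d → (p = c ∨ p = d)) then 1 else 0) := by
      intro p; rw [cset, Finset.card_filter]
    have h2 : ∀ x, (e x).card
        = ∑ p ∈ B, (if p ≠ x ∧ (∀ c d, AltRep U t x c d → (p = c ∨ p = d)) then 1 else 0) := by
      intro x; rw [hedef, Finset.card_filter]
    simp only [h1, h2]
    exact Finset.sum_comm
  -- each e x has at most two elements
  have he_le : ∀ x ∈ B, (e x).card ≤ 2 := by
    intro x hx
    obtain ⟨-, -, c, d, hr⟩ := mem_badF.1 hx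
    have hsub : e x ⊆ insert c {d} := by
      intro p hp
      have := (Finset.mem_filter.1 hp).2.2 c d hr
      simp only [Finset.mem_insert, Finset.mem_singleton]
      tauto
    calc (e x).card ≤ (insert c ({d} : Finset V)).card := Finset.card_le_card hsub
      _ ≤ ({d} : Finset V).card + 1 := Finset.card_insert_le _ _
      _ = 2 := by simp
  -- rigidity: all e x have exactly two elements
  have hall : ∀ x ∈ B, (e x).card = 2 := by
    intro x hx
    by_contra hne
    have hlt : (e x).card < 2 := lt_of_le_of_ne (he_le x hx) hne
    have h1 : ∑ x ∈ B, (e x).card < ∑ _x ∈ B, 2 :=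
      Finset.sum_lt_sum (fun i hi => he_le i hi) ⟨x, hx, hlt⟩
    have h2 : ∑ _p ∈ B, 2 ≤ ∑ p ∈ B, (cset U t p).card :=
      Finset.sum_le_sum hno'
    omega
  -- for any alternative representation (c,d) of x ∈ B we have e x = {c, d}
  have hrigid : ∀ x ∈ B, ∀ c d, AltRep U t x c d → e x = insert c {d} ∧ c ≠ d := by
    intro x hx c d hr
    have hsub : e x ⊆ insert c {d} := by
      intro p hp
      have := (Finset.mem_filter.1 hp).2.2 c d hr
      simp only [Finset.mem_insert, Finset.mem_singleton]
      tauto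
    have hle : (insert c ({d} : Finset V)).card ≤ (e x).card := by
      have : (insert c ({d} : Finset V)).card ≤ 2 :=
        le_trans (Finset.card_insert_le _ _) (by simp)
      rw [hall x hx]; exact this
    have heq := Finset.eq_of_subset_of_card_le hsub hle
    refine ⟨heq, ?_⟩
    intro hcd
    have h1 : (e x).card = 1 := by rw [heq, hcd]; simp
    have h2 := hall x hx
    omega
  -- membership consequences
  have hmem : ∀ x ∈ B, ∀ c d, AltRep U t x c d →
      c ∈ B ∧ d ∈ B ∧ c ≠ x ∧ d ≠ x ∧ c ≠ d := by
    intro x hx c d hr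
    obtain ⟨hex, hcd⟩ := hrigid x hx c d hr
    have hc : c ∈ e x := by rw [hex]; simp
    have hd : d ∈ e x := by rw [hex]; simp
    have hc' := Finset.mem_filter.1 hc
    have hd' := Finset.mem_filter.1 hd
    exact ⟨hc'.1, hd'.1, hc'.2.1, hd'.2.1, hcd⟩
  -- uniqueness of the alternative representation
  have huniq : ∀ x ∈ B, ∀ c d c' d', AltRep U t x c d → AltRep U t x c' d' →
      c = c' ∧ d = d' := by
    intro x hx c d c' d' hr hr'
    have h1 := (hrigid x hx c d hr).1
    have h2 := (hrigid x hx c' d' hr').1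
    have hcd := (hrigid x hx c d hr).2
    have heq12 : (insert c ({d} : Finset V)) = insert c' {d'} := by rw [← h1, h2]
    have hc' : c' ∈ insert c ({d} : Finset V) := by rw [heq12]; simp
    simp only [Finset.mem_insert, Finset.mem_singleton] at hc'
    rcases hc' with h | h
    · -- c' = c
      have hd : d = d' := by
        have h1' := hr.2.2.1
        have h2' := hr'.2.2.1
        rw [h] at h2'
        exact sub_right_inj.1 (h1'.trans h2'.symm)
      exact ⟨h.symm, hd⟩
    · -- c' = d : derive contradiction
      exfalso
      have hd' : d' ∈ insert c ({d} : Finset V) := by rw [heq12]; simp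
      simp only [Finset.mem_insert, Finset.mem_singleton] at hd'
      rcases hd' with h2' | h2'
      · -- d' = c : c - d = d - c
        have heqq : c - d = d - c := by
          have ha := hr.2.2.1
          have hb := hr'.2.2.1
          rw [h, h2'] at hb
          exact ha.trans hb.symm
        have h0 : (2:ℝ) • (c - d) = 0 := by
          rw [two_smul]
          nth_rewrite 2 [heqq]
          rw [sub_add_sub_cancel, sub_self]
        have h1 : c - d = 0 := (smul_eq_zero.1 h0).resolve_left (by norm_num)
        exact hcd (sub_eq_zero.1 h1)
      · -- d' = d : c - d = d - d = 0
        have heqq : c - d = d - d := by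
          have ha := hr.2.2.1
          have hb := hr'.2.2.1
          rw [h, h2'] at hb
          exact ha.trans hb.symm
        rw [sub_self] at heqq
        exact hcd (sub_eq_zero.1 heqq)
  -- pick x₀ and build a 3-element subset of cset U t d₀
  obtain ⟨x₀, hx₀⟩ := hB
  obtain ⟨hx₀U, hx₀t, c₀, d₀, hr₀⟩ := mem_badF.1 hx₀
  obtain ⟨hc₀B, hd₀B, hc₀x, hd₀x, hc₀d₀⟩ := hmem x₀ hx₀ c₀ d₀ hr₀
  obtain ⟨hd₀U, hd₀t, c₁, d₁, hr₁⟩ := mem_badF.1 hd₀B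
  obtain ⟨hc₁B, hd₁B, hc₁p, hd₁p, hc₁d₁⟩ := hmem d₀ hd₀B c₁ d₁ hr₁
  -- symmetric representations
  have hrc₀ : AltRep U t c₀ x₀ d₀ := altRep_symm hr₀ hx₀U hx₀t
  have hrc₁ : AltRep U t c₁ d₀ d₁ := altRep_symm hr₁ hd₀U hd₀t
  -- the three elements are in cset U t d₀
  have hx₀c : x₀ ∈ cset U t d₀ := by
    refine Finset.mem_filter.2 ⟨hx₀, hd₀x, ?_⟩
    intro c d hr
    obtain ⟨-, hdd⟩ := huniq x₀ hx₀ c₀ d₀ c d hr₀ hr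
    exact Or.inr hdd
  have hc₀c : c₀ ∈ cset U t d₀ := by
    refine Finset.mem_filter.2 ⟨hc₀B, Ne.symm hc₀d₀, ?_⟩
    intro c d hr
    obtain ⟨-, hdd⟩ := huniq c₀ hc₀B x₀ d₀ c d hrc₀ hr
    exact Or.inr hdd
  have hc₁c : c₁ ∈ cset U t d₀ := by
    refine Finset.mem_filter.2 ⟨hc₁B, Ne.symm hc₁p, ?_⟩
    intro c d hr
    obtain ⟨hcc, -⟩ := huniq c₁ hc₁B d₀ d₁ c d hrc₁ hr
    exact Or.inl hcc
  -- distinctness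
  have h12 : x₀ ≠ c₀ := Ne.symm hc₀x
  have h13 : x₀ ≠ c₁ := by
    rintro rfl
    obtain ⟨hh, -⟩ := huniq x₀ hx₀ c₀ d₀ d₀ d₁ hr₀ hrc₁
    exact hc₀d₀ hh
  have h23 : c₀ ≠ c₁ := by
    rintro rfl
    obtain ⟨hh, -⟩ := huniq c₀ hc₀B x₀ d₀ d₀ d₁ hrc₀ hrc₁
    exact hd₀x hh.symm
  have h3 : 3 ≤ (cset U t d₀).card := by
    have hsub : ({x₀, c₀, c₁} : Finset V) ⊆ cset U t d₀ := by
      intro y hy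
      simp only [Finset.mem_insert, Finset.mem_singleton] at hy
      rcases hy with rfl | rfl | rfl <;> assumption
    have hcard : ({x₀, c₀, c₁} : Finset V).card = 3 := by
      rw [Finset.card_insert_of_notMem (by simp [h12, h13]),
        Finset.card_insert_of_notMem (by simp [h23]), Finset.card_singleton]
    calc 3 = ({x₀, c₀, c₁} : Finset V).card := hcard.symm
      _ ≤ _ := Finset.card_le_card hsub
  -- final contradiction
  have hsum1 : ∑ _p ∈ B, 2 < ∑ p ∈ B, (cset U t p).card := by
    refine Finset.sum_lt_sum hno' ⟨d₀, hd₀B, ?_⟩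
    omega
  have hsum2 : ∑ x ∈ B, (e x).card ≤ ∑ _x ∈ B, 2 := Finset.sum_le_sum he_le
  omega


lemma span_erase [DecidableEq V] {U : Finset V} {t p : V} (ht : t ∈ U) (hp : p ∈ badF U t) :
    vectorSpan ℝ ((U.erase p : Finset V) : Set V) = vectorSpan ℝ (U : Set V) := by
  obtain ⟨hpU, hpt, c, d, hr⟩ := mem_badF.1 hp
  obtain ⟨hcU, hdU, heq, hnt⟩ := id hr
  have hdp : d ≠ p := altRep_d_ne hr
  have htp : t ≠ p := Ne.symm hpt
  refine le_antisymm (vectorSpan_mono ℝ ?_) ?_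
  · exact_mod_cast Finset.erase_subset p U
  set W := vectorSpan ℝ ((U.erase p : Finset V) : Set V) with hW
  have mem2 : ∀ x y : V, x ∈ U → x ≠ p → y ∈ U → y ≠ p → x - y ∈ W := by
    intro x y hx hxp hy hyp
    have h1 : x ∈ ((U.erase p : Finset V) : Set V) := by
      simp only [Finset.coe_erase, Set.mem_diff, Set.mem_singleton_iff]
      exact ⟨hx, hxp⟩
    have h2 : y ∈ ((U.erase p : Finset V) : Set V) := by
      simp only [Finset.coe_erase, Set.mem_diff, Set.mem_singleton_iff]
      exact ⟨hy, hyp⟩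
    have := vsub_mem_vectorSpan ℝ h1 h2
    rwa [vsub_eq_sub] at this
  have keymem : ∀ b, b ∈ U → b ≠ p → p - b ∈ W := by
    intro b hbU hbp
    by_cases hcp : c = p
    · -- degenerate case : p - d = t - p
      have h2 : p + p = t + d := by
        rw [hcp, sub_eq_sub_iff_add_eq_add] at heq
        exact heq
      have h3 : (2:ℝ) • (p - b) = (t - b) + (d - b) := by
        have h4 : (t - b) + (d - b) = (t + d) - (b + b) := by abel
        rw [← h2] at h4
        rw [h4, two_smul]
        abel
      have h4 : p - b = (2⁻¹:ℝ) • ((t - b) + (d - b)) := by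
        rw [← h3, smul_smul]
        norm_num
      rw [h4]
      exact W.smul_mem _ (W.add_mem (mem2 t b ht htp hbU hbp) (mem2 d b hdU hdp hbU hbp))
    · have h6 : t - c + d = p := by
        rw [sub_eq_sub_iff_add_eq_add] at heq
        have h7 : t - c + d - p = (t + d) - (c + p) := by abel
        rw [heq, sub_self] at h7
        exact sub_eq_zero.1 h7
      have h5 : p - b = (t - b) - (c - b) + (d - b) := by
        rw [← h6]; abel
      rw [h5]
      exact W.add_mem (W.sub_mem (mem2 t b ht htp hbU hbp) (mem2 c b hcU hcp hbU hbp))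
        (mem2 d b hdU hdp hbU hbp)
  rw [vectorSpan_def]
  refine Submodule.span_le.2 ?_
  rintro v hv
  rw [Set.mem_vsub] at hv
  obtain ⟨a, ha, b, hb, rfl⟩ := hv
  rw [Finset.mem_coe] at ha hb
  rw [SetLike.mem_coe, vsub_eq_sub]
  by_cases hap : a = p
  · by_cases hbp : b = p
    · rw [hap, hbp, sub_self]; exact W.zero_mem
    · rw [hap]; exact keymem b hb hbp
  · by_cases hbp : b = p
    · rw [hbp, ← neg_sub]
      exact W.neg_mem (keymem a ha hap)
    · exact mem2 a b ha hap hb hbp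

theorem claim1 : ∀ (U : Finset V), ∀ t ∈ U,
    (badF U t).card + 2 * (Module.finrank ℝ (vectorSpan ℝ (U : Set V))) + 2 ≤ 2 * U.card := by
  classical
  intro U
  induction U using Finset.strongInduction with
  | _ U ih =>
    intro t ht
    have hUpos : 1 ≤ U.card := Finset.card_pos.2 ⟨t, ht⟩
    by_cases hB : (badF U t).Nonempty
    · obtain ⟨p, hpB, hpcnt⟩ := exists_cset_small ht hB
      have hpU : p ∈ U := (mem_badF.1 hpB).1
      have hpt : p ≠ t := (mem_badF.1 hpB).2.1
      have htep : t ∈ U.erase p := Finset.mem_erase.2 ⟨Ne.symm hpt, ht⟩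
      have hIH := ih (U.erase p) (Finset.erase_ssubset hpU) t htep
      rw [span_erase ht hpB, Finset.card_erase_of_mem hpU] at hIH
      -- badF U t ⊆ insert p (cset U t p ∪ badF (U.erase p) t)
      have hsub : badF U t ⊆ insert p ((cset U t p) ∪ badF (U.erase p) t) := by
        intro x hx
        obtain ⟨hxU, hxt, cx, dx, hrx⟩ := mem_badF.1 hx
        by_cases hxp : x = p
        · exact Finset.mem_insert.2 (Or.inl hxp)
        · refine Finset.mem_insert.2 (Or.inr (Finset.mem_union.2 ?_))
          by_cases hEss : ∀ c' d', AltRep U t x c' d' → (p = c' ∨ p = d')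
          · exact Or.inl (Finset.mem_filter.2 ⟨hx, fun e => hxp e.symm, hEss⟩)
          · push_neg at hEss
            obtain ⟨c', d', hr', hpc, hpd⟩ := hEss
            refine Or.inr (mem_badF.2 ⟨Finset.mem_erase.2 ⟨hxp, hxU⟩, hxt, c', d', ?_⟩)
            exact ⟨Finset.mem_erase.2 ⟨Ne.symm hpc, hr'.1⟩,
              Finset.mem_erase.2 ⟨Ne.symm hpd, hr'.2.1⟩, hr'.2.2.1, hr'.2.2.2⟩
      have hcard : (badF U t).card ≤ (badF (U.erase p) t).card + 2 := by
        calc (badF U t).card ≤ (insert p ((cset U t p) ∪ badF (U.erase p) t)).card :=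
              Finset.card_le_card hsub
          _ ≤ ((cset U t p) ∪ badF (U.erase p) t).card + 1 := Finset.card_insert_le _ _
          _ ≤ ((cset U t p).card + (badF (U.erase p) t).card) + 1 := by
              have := Finset.card_union_le (cset U t p) (badF (U.erase p) t)
              omega
          _ ≤ (badF (U.erase p) t).card + 2 := by omega
      omega
    · rw [Finset.not_nonempty_iff_eq_empty] at hB
      rw [hB, Finset.card_empty]
      have hle : Module.finrank ℝ (vectorSpan ℝ (U : Set V)) ≤ U.card - 1 := by
        have hcardc : Fintype.card {x // x ∈ U} = (U.card - 1) + 1 := by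
          rw [Fintype.card_coe]; omega
        have h2 := finrank_vectorSpan_range_le ℝ (fun x : {x // x ∈ U} => (x : V)) hcardc
        have h3 : Set.range (fun x : {x // x ∈ U} => (x : V)) = (U : Set V) := by
          rw [Subtype.range_coe_subtype]
          ext y; simp
        rwa [h3] at h2
      omega


end Claim1

set_option maxHeartbeats 1000000 in
theorem stmt_9 {d m u : ℕ} (hd : 4 ≤ d) (hm : 2 ≤ m)
    (R : Submodule ℝ (Fin d → ℝ))
    (hR1 : 1 ≤ Module.finrank ℝ R) (hR2 : Module.finrank ℝ R ≤ d - 1)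
    (Z : Finset (Fin d → ℝ)) (hZ : Z.Nonempty)
    (hcosets : ((R.mkQ) '' (Z : Set (Fin d → ℝ))).ncard = m)
    (hu : Module.finrank ℝ
        (affineSpan ℝ ((R.mkQ) '' (Z : Set (Fin d → ℝ)))).direction = u)
    (hum : u + 1 ≤ m) (hmu : m ≤ 2 * u) :
    ((((Z : Set (Fin d → ℝ)) - (Z : Set (Fin d → ℝ))) \ (R : Set (Fin d → ℝ))).ncard : ℤ)
      ≥ 2 * (2 * (u : ℤ) + 1 - m) * Z.card - 16 * ((u : ℤ) ^ 2 + m ^ 2) := by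
  classical
  set U : Finset ((Fin d → ℝ) ⧸ R) := Z.image (fun z => R.mkQ z) with hUdef
  have hcoe : (R.mkQ '' (Z : Set (Fin d → ℝ))) = (U : Set ((Fin d → ℝ) ⧸ R)) := by
    rw [hUdef, Finset.coe_image]
  have hmU : U.card = m := by rw [← hcosets, hcoe, Set.ncard_coe_finset]
  rw [hcoe, direction_affineSpan] at hu
  -- fibers
  set Za : ((Fin d → ℝ) ⧸ R) → Finset (Fin d → ℝ) :=
    fun a => Z.filter (fun z => R.mkQ z = a) with hZadef
  have hZaNe : ∀ a ∈ U, (Za a).Nonempty := by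
    intro a ha
    obtain ⟨z, hz, rfl⟩ := Finset.mem_image.1 ha
    exact ⟨z, Finset.mem_filter.2 ⟨hz, rfl⟩⟩
  have hNsum : ∑ a ∈ U, (Za a).card = Z.card :=
    (Finset.card_eq_sum_card_fiberwise (fun x hx => Finset.mem_image_of_mem _ hx)).symm
  -- good pairs
  set good : ((Fin d → ℝ) ⧸ R) → Finset ((Fin d → ℝ) ⧸ R) := fun a =>
    (U.erase a).filter (fun b => ∀ c ∈ U, ∀ e ∈ U, c - e = a - b → c = a ∧ e = b) with hgooddef
  have hgU : ∀ a, ∀ b ∈ good a, b ∈ U := fun a b hb =>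
    Finset.mem_of_mem_erase (Finset.mem_filter.1 hb).1
  have hgne : ∀ a, ∀ b ∈ good a, b ≠ a := fun a b hb =>
    (Finset.mem_erase.1 (Finset.mem_filter.1 hb).1).1
  -- relation with badF and claim1
  have hgoodbad : ∀ a ∈ U, (good a).card + (badF U a).card = U.card - 1 := by
    intro a ha
    have hbad : badF U a = (U.erase a).filter
        (fun b => ¬ ∀ c ∈ U, ∀ e ∈ U, c - e = a - b → c = a ∧ e = b) := by
      ext x
      rw [mem_badF]
      simp only [Finset.mem_filter, Finset.mem_erase]
      constructor
      · rintro ⟨hxU, hxt, c, e, hcU, heU, heq, hnt⟩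
        exact ⟨⟨hxt, hxU⟩, fun hP => hnt (hP c hcU e heU heq)⟩
      · rintro ⟨⟨hxt, hxU⟩, hnP⟩
        push_neg at hnP
        obtain ⟨c, hc, e, he, heq, hne⟩ := hnP
        exact ⟨hxU, hxt, c, e, hc, he, heq, fun hand => hne hand.1 hand.2⟩
    rw [hgooddef, hbad, Finset.card_filter_add_card_filter_not,
      Finset.card_erase_of_mem ha]
  have hgcard : ∀ a ∈ U, (2 * (u:ℤ) + 1) ≤ ((good a).card : ℤ) + m := by
    intro a ha
    have h1 := claim1 U a ha
    rw [hu, hmU] at h1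
    have h2 := hgoodbad a ha
    rw [hmU] at h2
    have hm1 : (1:ℕ) ≤ m := le_trans (by norm_num) hm
    have : 2 * u + 1 ≤ (good a).card + m := by omega
    exact_mod_cast this
  -- symmetry of goodness
  have hsymm : ∀ a ∈ U, ∀ b, b ∈ good a → a ∈ good b := by
    intro a ha b hb
    obtain ⟨hbe, hP⟩ := Finset.mem_filter.1 hb
    obtain ⟨hba, hbU⟩ := Finset.mem_erase.1 hbe
    refine Finset.mem_filter.2 ⟨Finset.mem_erase.2 ⟨fun e => hba e.symm, ha⟩, ?_⟩
    intro c hc e he hce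
    have h2 : e - c = a - b := by
      have := congrArg Neg.neg hce
      rwa [neg_sub, neg_sub] at this
    obtain ⟨h3, h4⟩ := hP e he c hc h2
    exact ⟨h4, h3⟩
  -- the finset T
  set T : Finset (Fin d → ℝ) := (Z - Z).filter (fun w => w ∉ R) with hTdef
  have hTset : (((Z : Set (Fin d → ℝ)) - (Z : Set (Fin d → ℝ))) \ (R : Set (Fin d → ℝ)))
      = (T : Set (Fin d → ℝ)) := by
    rw [← Finset.coe_sub]
    ext w
    simp only [Set.mem_diff, Finset.mem_coe, Finset.mem_filter, SetLike.mem_coe, hTdef]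
  -- difference fibers
  set F : ((Fin d → ℝ) ⧸ R) → ((Fin d → ℝ) ⧸ R) → Finset (Fin d → ℝ) :=
    fun a b => Za a - Za b with hFdef
  have hψF : ∀ a b, ∀ w ∈ F a b, R.mkQ w = a - b := by
    intro a b w hw
    obtain ⟨y, hy, z, hz, rfl⟩ := Finset.mem_sub.1 hw
    have hya := (Finset.mem_filter.1 hy).2
    have hzb := (Finset.mem_filter.1 hz).2
    rw [map_sub, hya, hzb]
  have hFT : ∀ a ∈ U, ∀ b ∈ good a, F a b ⊆ T := by
    intro a ha b hb w hw
    have hmk := hψF a b w hw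
    obtain ⟨y, hy, z, hz, rfl⟩ := Finset.mem_sub.1 hw
    refine Finset.mem_filter.2 ⟨Finset.sub_mem_sub (Finset.filter_subset _ _ hy)
      (Finset.filter_subset _ _ hz), ?_⟩
    intro hmem
    have h0 : R.mkQ (y - z) = 0 := by
      rw [Submodule.mkQ_apply, Submodule.Quotient.mk_eq_zero]
      exact hmem
    have h1 : a - b = 0 := by rw [← hmk]; exact h0
    exact (hgne a b hb) (sub_eq_zero.1 h1).symm
  -- disjointness
  have hinner : ∀ a ∈ U, ∑ b ∈ good a, (F a b).card = ((good a).biUnion (F a)).card := by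
    intro a ha
    refine (Finset.card_biUnion ?_).symm
    intro b hb b' hb' hne
    rw [Function.onFun, Finset.disjoint_left]
    intro w hw hw'
    have h1 := hψF a b w hw
    have h2 := hψF a b' w hw'
    exact hne (sub_right_inj.1 (h1.symm.trans h2))
  have houter : ∑ a ∈ U, ((good a).biUnion (F a)).card
      = (U.biUnion (fun a => (good a).biUnion (F a))).card := by
    refine (Finset.card_biUnion ?_).symm
    intro a ha a' ha' hne
    rw [Function.onFun, Finset.disjoint_left]
    intro w hw hw'
    obtain ⟨b, hb, hwb⟩ := Finset.mem_biUnion.1 hw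
    obtain ⟨b', hb', hwb'⟩ := Finset.mem_biUnion.1 hw'
    have hP := (Finset.mem_filter.1 hb).2
    have h1 := hψF a b w hwb
    have h2 := hψF a' b' w hwb'
    obtain ⟨h3, -⟩ := hP a' ha' b' (hgU a' b' hb') (h2.symm.trans h1)
    exact hne h3.symm
  have hunion : (U.biUnion fun a => (good a).biUnion (F a)) ⊆ T := by
    intro w hw
    obtain ⟨a, ha, hw1⟩ := Finset.mem_biUnion.1 hw
    obtain ⟨b, hb, hw2⟩ := Finset.mem_biUnion.1 hw1
    exact hFT a ha b hb hw2
  have hkey : ∑ a ∈ U, ∑ b ∈ good a, (F a b).card ≤ T.card := by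
    calc ∑ a ∈ U, ∑ b ∈ good a, (F a b).card
        = ∑ a ∈ U, ((good a).biUnion (F a)).card := Finset.sum_congr rfl hinner
      _ = (U.biUnion (fun a => (good a).biUnion (F a))).card := houter
      _ ≤ T.card := Finset.card_le_card hunion
  -- Cauchy-Davenport lower bound on each fiber difference
  have htf : IsAddTorsionFree (Fin d → ℝ) :=
    IsAddTorsionFree.of_module_rat _
  have hFlb : ∀ a ∈ U, ∀ b ∈ U, (Za a).card + (Za b).card ≤ (F a b).card + 1 := by
    intro a ha b hb
    have hA := hZaNe a ha
    have hBn := hZaNe b hb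
    have hnegB : (-(Za b)).Nonempty := hBn.neg
    have h1 := cauchy_davenport_of_isAddTorsionFree hA hnegB
    rw [Finset.card_neg] at h1
    have h2 : F a b = Za a + (-(Za b)) := sub_eq_add_neg _ _
    have hA1 : 1 ≤ (Za a).card := Finset.card_pos.2 hA
    have hB1 : 1 ≤ (Za b).card := Finset.card_pos.2 hBn
    rw [h2]
    omega
  -- integer computations
  have main1 : ∑ a ∈ U, ∑ b ∈ good a, (((Za a).card : ℤ) + ((Za b).card : ℤ) - 1)
      ≤ (T.card : ℤ) := by
    calc ∑ a ∈ U, ∑ b ∈ good a, (((Za a).card : ℤ) + ((Za b).card : ℤ) - 1)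
        ≤ ∑ a ∈ U, ∑ b ∈ good a, ((F a b).card : ℤ) := by
          refine Finset.sum_le_sum fun a ha => Finset.sum_le_sum fun b hb => ?_
          have := hFlb a ha b (hgU a b hb)
          push_cast
          omega
      _ ≤ (T.card : ℤ) := by exact_mod_cast hkey
  have hsplit : ∑ a ∈ U, ∑ b ∈ good a, (((Za a).card : ℤ) + ((Za b).card : ℤ) - 1)
      = (∑ a ∈ U, ((good a).card : ℤ) * ((Za a).card : ℤ))
        + (∑ a ∈ U, ∑ b ∈ good a, ((Za b).card : ℤ))
        - ∑ a ∈ U, ((good a).card : ℤ) := by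
    have hinner2 : ∀ a ∈ U, ∑ b ∈ good a, (((Za a).card : ℤ) + ((Za b).card : ℤ) - 1)
        = ((good a).card : ℤ) * ((Za a).card : ℤ)
          + (∑ b ∈ good a, ((Za b).card : ℤ)) - ((good a).card : ℤ) := by
      intro a ha
      rw [Finset.sum_sub_distrib, Finset.sum_add_distrib, Finset.sum_const, Finset.sum_const]
      push_cast
      ring
    rw [Finset.sum_congr rfl hinner2, Finset.sum_sub_distrib, Finset.sum_add_distrib]
  have hswap2 : ∑ a ∈ U, ∑ b ∈ good a, ((Za b).card : ℤ)
      = ∑ b ∈ U, ((good b).card : ℤ) * ((Za b).card : ℤ) := by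
    have hcomm := Finset.sum_comm' (s := U) (t := fun a => good a) (t' := U)
      (s' := fun b => good b) (f := fun _ b => ((Za b).card : ℤ))
      (fun x y => ⟨fun ⟨hx, hy⟩ => ⟨hsymm x hx y hy, hgU x y hy⟩,
        fun ⟨hx', hy'⟩ => ⟨hgU y x hx', hsymm y hy' x hx'⟩⟩)
    rw [hcomm]
    refine Finset.sum_congr rfl fun b hb => ?_
    rw [Finset.sum_const]
    push_cast
    ring
  have hZcast : (Z.card : ℤ) = ∑ a ∈ U, ((Za a).card : ℤ) := by
    rw [← hNsum]
    push_cast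
    rfl
  have hbound1 : (2 * (u:ℤ) + 1 - m) * (Z.card : ℤ)
      ≤ ∑ a ∈ U, ((good a).card : ℤ) * ((Za a).card : ℤ) := by
    rw [hZcast, Finset.mul_sum]
    refine Finset.sum_le_sum fun a ha => ?_
    have h1 := hgcard a ha
    have h2 : (0:ℤ) ≤ ((Za a).card : ℤ) := Int.natCast_nonneg _
    nlinarith
  have hbound3 : ∑ a ∈ U, ((good a).card : ℤ) ≤ (m:ℤ) * (m - 1) := by
    calc ∑ a ∈ U, ((good a).card : ℤ) ≤ ∑ _a ∈ U, ((m:ℤ) - 1) := by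
          refine Finset.sum_le_sum fun a ha => ?_
          have hsub : good a ⊆ U.erase a := Finset.filter_subset _ _
          have h1 : (good a).card ≤ U.card - 1 := by
            have := Finset.card_le_card hsub
            rwa [Finset.card_erase_of_mem ha] at this
          have hm1 : 1 ≤ U.card := Finset.card_pos.2 ⟨a, ha⟩
          rw [hmU] at h1 hm1
          omega
      _ = (m:ℤ) * (m - 1) := by
          rw [Finset.sum_const, hmU]
          push_cast
          ring
  -- put everything together
  rw [hTset, Set.ncard_coe_finset, ge_iff_le]
  have hfinal : 2 * (2 * (u:ℤ) + 1 - m) * (Z.card : ℤ) - (m:ℤ) * (m-1) ≤ (T.card : ℤ) := by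
    rw [hsplit, hswap2] at main1
    linarith [hbound1, hbound3, main1]
  have hmpos : (0:ℤ) ≤ (m:ℤ) := Int.natCast_nonneg _
  have hupos : (0:ℤ) ≤ (u:ℤ) := Int.natCast_nonneg _
  have herr : (m:ℤ) * (m - 1) ≤ 16 * ((u:ℤ) ^ 2 + (m:ℤ) ^ 2) := by nlinarith
  linarith [hfinal, herr]
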